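/- If D_t < 0 (i.e., 1 < S ≤ 2), then D_i > D_t: with s1t = S/2 and s1i = (S(1−p) + (2−S)p) / ((S(1−p) + (2−S)p) + (Sq + (2−S)(1−q))), for 0 < p ≤ 1 and 0 < q ≤ 1, we have s1i < s1t, hence 1/2 − s1i > 1/2 − s1t. -/
import Mathlib

theorem stmt_8 (p q S : ℝ) (hp0 : 0 < p) (hp1 : p ≤ 1) (hq0 : 0 < q) (hq1 : q ≤ 1)
    (hS1 : 1 < S) (hS2 : S ≤ 2) :
    (S * (1 - p) + (2 - S) * p) /
        ((S * (1 - p) + (2 - S) * p) + (S * q + (2 - S) * (1 - q))) < S / 2 ∧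
      1 / 2 - (S * (1 - p) + (2 - S) * p) /
          ((S * (1 - p) + (2 - S) * p) + (S * q + (2 - S) * (1 - q))) > 1 / 2 - S / 2 := by
  have hden : 0 < (S * (1 - p) + (2 - S) * p) + (S * q + (2 - S) * (1 - q)) := by
    nlinarith [mul_nonneg (sub_nonneg.mpr hp1) (le_of_lt (lt_trans one_pos hS1)),
      mul_nonneg (sub_nonneg.mpr hS2) hp0.le,
      mul_pos (lt_trans one_pos hS1) hq0,
      mul_nonneg (sub_nonneg.mpr hS2) (sub_nonneg.mpr hq1)]
  have key : (S * (1 - p) + (2 - S) * p) /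
      ((S * (1 - p) + (2 - S) * p) + (S * q + (2 - S) * (1 - q))) < S / 2 := by
    rw [div_lt_div_iff₀ hden two_pos]
    nlinarith [mul_pos (lt_trans one_pos hS1) hq0,
      mul_nonneg (sub_nonneg.mpr hS2) hp0.le, sub_pos.mpr hS1,
      mul_pos (sub_pos.mpr hS1) (mul_pos (lt_trans one_pos hS1) hq0),
      mul_nonneg (sub_pos.mpr hS1).le (mul_nonneg (sub_nonneg.mpr hS2) hp0.le)]
  exact ⟨key, by linarith⟩
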